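/- Let K be a field and n ≥ 1. Let (E, F, G) be a transverse triple of complete flags in K^n. Then there exists a basis (e_1, …, e_n) of K^n such that for every 0 ≤ a ≤ n one has E(a) = span(e_1, …, e_a) and F(a) = span(e_{n−a+1}, …, e_n), and moreover G(1) = span(e_1 + e_2 + … + e_n). -/

import Mathlib

/-- A complete flag in `K^n`: a map assigning to each `a ∈ {0,…,n}` an `a`-dimensional
subspace, nested increasingly. -/
def IsCompleteFlag (K : Type*) [Field K] (n : ℕ) (E : ℕ → Submodule K (Fin n → K)) : Prop :=
  (∀ a, a ≤ n → Module.finrank K (E a) = a) ∧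
  (∀ a b, a ≤ b → b ≤ n → E a ≤ E b)

/-- For a transverse triple of complete flags `(E,F,G)` there is a basis `e` of `K^n`
adapted to `E` (ascending) and `F` (descending) such that `G(1)` is spanned by the sum
of the basis vectors. -/
theorem exists_basis_adapted_to_transverse_flag_triple
    {K : Type*} [Field K] {n : ℕ} (hn : 1 ≤ n)
    (E F G : ℕ → Submodule K (Fin n → K))
    (hE : IsCompleteFlag K n E) (hF : IsCompleteFlag K n F) (hG : IsCompleteFlag K n G)
    (htrans : ∀ a b c : ℕ, a + b + c = n → E a ⊔ F b ⊔ G c = ⊤) :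
    ∃ e : Fin n → (Fin n → K),
      LinearIndependent K e ∧
      Submodule.span K (Set.range e) = ⊤ ∧
      (∀ a, a ≤ n →
        E a = Submodule.span K (e '' {i : Fin n | (i : ℕ) < a}) ∧
        F a = Submodule.span K (e '' {i : Fin n | n - a ≤ (i : ℕ)})) ∧
      G 1 = Submodule.span K ({∑ i, e i} : Set (Fin n → K)) := by
  classical
  obtain ⟨hEd, hEm⟩ := hE
  obtain ⟨hFd, hFm⟩ := hF
  obtain ⟨hGd, hGm⟩ := hG
  have hdim : Module.finrank K (Fin n → K) = n := by simp
  have hE0 : E 0 = ⊥ := Submodule.finrank_eq_zero.mp (hEd 0 (Nat.zero_le n))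
  have hF0 : F 0 = ⊥ := Submodule.finrank_eq_zero.mp (hFd 0 (Nat.zero_le n))
  have hG0 : G 0 = ⊥ := Submodule.finrank_eq_zero.mp (hGd 0 (Nat.zero_le n))
  have hEtop : E n = ⊤ := Submodule.eq_top_of_finrank_eq (by rw [hEd n le_rfl, hdim])
  have hsup : ∀ a b : ℕ, a + b = n → E a ⊔ F b = ⊤ := by
    intro a b hab
    have := htrans a b 0 (by omega)
    rwa [hG0, sup_bot_eq] at this
  -- a generator of G 1
  have hG1ne : G 1 ≠ ⊥ := by
    intro h
    have := hGd 1 hn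
    rw [h] at this
    simp at this
  obtain ⟨v, hvG, hv0⟩ := Submodule.exists_mem_ne_zero_of_ne_bot hG1ne
  have hG1span : G 1 = Submodule.span K ({v} : Set (Fin n → K)) := by
    refine (Submodule.eq_of_le_of_finrank_le ?_ ?_).symm
    · exact Submodule.span_le.mpr (Set.singleton_subset_iff.mpr hvG)
    · rw [hGd 1 hn]
      rw [show Submodule.span K ({v} : Set (Fin n → K)) = K ∙ v from rfl,
        finrank_span_singleton hv0]
  -- decompose v relative to E a and F (n - a)
  have hdecomp : ∀ a : ℕ, a ≤ n → ∃ x : Fin n → K, x ∈ E a ∧ v - x ∈ F (n - a) := by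
    intro a ha
    have hv : v ∈ E a ⊔ F (n - a) := by
      rw [hsup a (n - a) (by omega)]; trivial
    obtain ⟨x, hx, y, hy, hxy⟩ := Submodule.mem_sup.mp hv
    exact ⟨x, hx, by rw [← hxy]; simpa using hy⟩
  choose x' hx' hy' using hdecomp
  set X : ℕ → (Fin n → K) := fun a => if h : a ≤ n then x' a h else 0 with hXdef
  have hX : ∀ a : ℕ, a ≤ n → X a ∈ E a := by
    intro a ha; simp only [hXdef, dif_pos ha]; exact hx' a ha
  have hY : ∀ a : ℕ, a ≤ n → v - X a ∈ F (n - a) := by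
    intro a ha; simp only [hXdef, dif_pos ha]; exact hy' a ha
  have hX0 : X 0 = 0 := by
    have := hX 0 (Nat.zero_le n)
    rwa [hE0, Submodule.mem_bot] at this
  have hXn : X n = v := by
    have := hY n le_rfl
    rw [Nat.sub_self, hF0, Submodule.mem_bot, sub_eq_zero] at this
    exact this.symm
  set e : Fin n → (Fin n → K) := fun i => X (i.val + 1) - X i.val with hedef
  have heE : ∀ i : Fin n, e i ∈ E (i.val + 1) :=
    fun i => sub_mem (hX _ i.isLt) (hEm i.val (i.val + 1) (Nat.le_succ _) i.isLt (hX _ i.isLt.le))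
  have heF : ∀ i : Fin n, e i ∈ F (n - i.val) := by
    intro i
    have h1 : v - X i.val ∈ F (n - i.val) := hY i.val i.isLt.le
    have h2 : v - X (i.val + 1) ∈ F (n - i.val) :=
      hFm (n - (i.val + 1)) (n - i.val) (by omega) (by omega) (hY (i.val + 1) i.isLt)
    have : e i = (v - X i.val) - (v - X (i.val + 1)) := by simp [hedef]
    rw [this]
    exact sub_mem h1 h2
  -- the key non-degeneracy fact
  have key : ∀ i : Fin n, e i ∉ E i.val := by
    intro i hmem
    have hvmem : v ∈ E i.val ⊔ F (n - 1 - i.val) := by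
      have hvrw : v = (X i.val + e i) + (v - X (i.val + 1)) := by
        simp [hedef]
      rw [hvrw]
      refine add_mem (Submodule.mem_sup_left (add_mem (hX _ i.isLt.le) hmem))
        (Submodule.mem_sup_right ?_)
      have := hY (i.val + 1) i.isLt
      have harith : n - (i.val + 1) = n - 1 - i.val := by omega
      rwa [harith] at this
    have hG1le : G 1 ≤ E i.val ⊔ F (n - 1 - i.val) := by
      rw [hG1span]
      exact Submodule.span_le.mpr (Set.singleton_subset_iff.mpr hvmem)
    have htop : E i.val ⊔ F (n - 1 - i.val) = ⊤ := by
      have h3 := htrans i.val (n - 1 - i.val) 1 (by have := i.isLt; omega)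
      rwa [sup_eq_left.mpr hG1le] at h3
    have hfr := Submodule.finrank_sup_add_finrank_inf_eq (E i.val) (F (n - 1 - i.val))
    rw [htop] at hfr
    have hEi := hEd i.val i.isLt.le
    have hFi := hFd (n - 1 - i.val) (by omega)
    have hfrtop : Module.finrank K (⊤ : Submodule K (Fin n → K)) = n := by
      rw [finrank_top, hdim]
    rw [hfrtop, hEi, hFi] at hfr
    have := i.isLt
    omega
  have hene : ∀ i : Fin n, e i ≠ 0 := by
    intro i h
    exact key i (h ▸ (E i.val).zero_mem)
  -- span of initial segments contains E a
  have hspanE : ∀ a : ℕ, a ≤ n → E a ≤ Submodule.span K (e '' {i : Fin n | (i : ℕ) < a}) := by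
    intro a
    induction a with
    | zero => intro _; rw [hE0]; exact bot_le
    | succ a ih =>
      intro ha
      have ha' : a < n := ha
      set ia : Fin n := ⟨a, ha'⟩ with hia
      have hle : E a ⊔ Submodule.span K {e ia} ≤ E (a + 1) := by
        refine sup_le (hEm a (a + 1) (Nat.le_succ a) ha) ?_
        exact Submodule.span_le.mpr (Set.singleton_subset_iff.mpr (heE ia))
      have hinf : E a ⊓ Submodule.span K {e ia} = ⊥ := by
        rw [eq_bot_iff]
        intro z hz
        obtain ⟨hz1, hz2⟩ := Submodule.mem_inf.mp hz
        rw [Submodule.mem_span_singleton] at hz2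
        obtain ⟨c, rfl⟩ := hz2
        rcases eq_or_ne c 0 with rfl | hc
        · simp
        · exfalso
          apply key ia
          have := (E a).smul_mem c⁻¹ hz1
          rwa [smul_smul, inv_mul_cancel₀ hc, one_smul] at this
      have hfr : Module.finrank K ↥(E a ⊔ Submodule.span K {e ia}) = a + 1 := by
        have h2 := Submodule.finrank_sup_add_finrank_inf_eq (E a) (Submodule.span K {e ia})
        rw [hinf, finrank_bot, hEd a ha'.le] at h2
        rw [show Submodule.span K ({e ia} : Set (Fin n → K)) = K ∙ (e ia) from rfl,
          finrank_span_singleton (hene ia)] at h2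
        omega
      have heq : E (a + 1) = E a ⊔ Submodule.span K {e ia} :=
        (Submodule.eq_of_le_of_finrank_le hle (by rw [hfr, hEd (a + 1) ha])).symm
      rw [heq]
      refine sup_le ?_ ?_
      · refine (ih ha'.le).trans (Submodule.span_mono (Set.image_mono (f := e) ?_))
        intro i hi
        simp only [Set.mem_setOf_eq] at hi ⊢
        omega
      · exact Submodule.span_le.mpr (Set.singleton_subset_iff.mpr
          (Submodule.subset_span ⟨ia, by simp [hia], rfl⟩))
  have hspan_top : Submodule.span K (Set.range e) = ⊤ := by
    rw [eq_top_iff]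
    have h1 := hspanE n le_rfl
    rw [hEtop] at h1
    refine h1.trans (Submodule.span_mono ?_)
    rintro z ⟨i, _, rfl⟩
    exact ⟨i, rfl⟩
  have hli : LinearIndependent K e := by
    refine linearIndependent_of_top_le_span_of_card_eq_finrank hspan_top.ge ?_
    simp [hdim]
  refine ⟨e, hli, hspan_top, ?_, ?_⟩
  · intro a ha
    constructor
    · -- E a
      have himg : e '' {i : Fin n | (i : ℕ) < a}
          = Set.range (fun j : Fin a => e ⟨j.val, lt_of_lt_of_le j.isLt ha⟩) := by
        ext z
        constructor
        · rintro ⟨i, hi, rfl⟩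
          exact ⟨⟨i.val, hi⟩, rfl⟩
        · rintro ⟨j, rfl⟩
          exact ⟨⟨j.val, lt_of_lt_of_le j.isLt ha⟩, j.isLt, rfl⟩
      have hinj : Function.Injective (fun j : Fin a => (⟨j.val, lt_of_lt_of_le j.isLt ha⟩ : Fin n)) := by
        intro j k h
        simpa [Fin.ext_iff] using h
      have hli' : LinearIndependent K (fun j : Fin a => e ⟨j.val, lt_of_lt_of_le j.isLt ha⟩) :=
        hli.comp _ hinj
      have hfr : Module.finrank K ↥(Submodule.span K (e '' {i : Fin n | (i : ℕ) < a})) = a := by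
        rw [himg, finrank_span_eq_card hli', Fintype.card_fin]
      refine (Submodule.eq_of_le_of_finrank_le ?_ ?_).symm
      · rw [Submodule.span_le]
        rintro z ⟨i, hi, rfl⟩
        exact hEm (i.val + 1) a hi ha (heE i)
      · rw [hEd a ha, hfr]
    · -- F a
      have himg : e '' {i : Fin n | n - a ≤ (i : ℕ)}
          = Set.range (fun j : Fin a => e ⟨n - a + j.val, by omega⟩) := by
        ext z
        constructor
        · rintro ⟨i, hi, rfl⟩
          simp only [Set.mem_setOf_eq] at hi
          have hin := i.isLt
          refine ⟨⟨i.val - (n - a), by omega⟩, ?_⟩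
          exact congrArg e (Fin.ext (by simp only [Fin.val_mk]; omega))
        · rintro ⟨j, rfl⟩
          have hj := j.isLt
          exact ⟨⟨n - a + j.val, by omega⟩, by simp only [Set.mem_setOf_eq, Fin.val_mk]; omega, rfl⟩
      have hinj : Function.Injective (fun j : Fin a => (⟨n - a + j.val, by omega⟩ : Fin n)) := by
        intro j k h
        simp only [Fin.mk.injEq, Fin.ext_iff] at h ⊢
        omega
      have hli' : LinearIndependent K (fun j : Fin a => e ⟨n - a + j.val, by omega⟩) :=
        hli.comp _ hinj
      have hfr : Module.finrank K ↥(Submodule.span K (e '' {i : Fin n | n - a ≤ (i : ℕ)})) = a := by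
        rw [himg, finrank_span_eq_card hli', Fintype.card_fin]
      refine (Submodule.eq_of_le_of_finrank_le ?_ ?_).symm
      · rw [Submodule.span_le]
        rintro z ⟨i, hi, rfl⟩
        simp only [Set.mem_setOf_eq] at hi
        exact hFm (n - i.val) a (by have := i.isLt; omega) ha (heF i)
      · rw [hFd a ha, hfr]
  · -- G 1
    have hsum : ∑ i, e i = v := by
      have h1 : ∑ i : Fin n, e i = ∑ i ∈ Finset.range n, (X (i + 1) - X i) := by
        rw [Fin.sum_univ_eq_sum_range (fun k => X (k + 1) - X k) n]
      rw [h1, Finset.sum_range_sub, hXn, hX0, sub_zero]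
    rw [hsum, hG1span]
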